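/- Let S be a profinite semigroup which is a KR-cover. Then S^I, the profinite monoid obtained from S by adjoining an isolated identity element I (even if S is a monoid), is a KR-cover. -/

import Mathlib

set_option autoImplicit false

/-! ### General notions: topological semigroups, pseudovarieties, pro-V semigroups -/

/-- Continuity of a map into a type regarded with the discrete topology. -/
def ContinuousDisc {S : Type} [TopologicalSpace S] {T : Type} (f : S → T) : Prop :=
  @Continuous S T _ ⊥ f

/-- A pseudovariety of semigroups: a class of finite semigroups closed under
homomorphic images, subsemigroups and finite direct products. -/
structure Pseudovariety : Type 1 where
  Mem : ∀ (S : Type) [Semigroup S], Prop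
  finite : ∀ (S : Type) [Semigroup S], Mem S → Finite S
  closed_hom : ∀ (S T : Type) [Semigroup S] [Semigroup T] (f : S →ₙ* T),
    Mem S → Function.Surjective f → Mem T
  closed_sub : ∀ (S T : Type) [Semigroup S] [Semigroup T] (f : T →ₙ* S),
    Mem S → Function.Injective f → Mem T
  closed_prod : ∀ (ι : Type) [Finite ι] (S : ι → Type) [∀ i, Semigroup (S i)],
    (∀ i, Mem (S i)) → Mem (∀ i, S i)

/-- A bundled member of a pseudovariety `V` (a finite semigroup belonging to `V`),
always regarded as carrying the discrete topology. -/
structure SgrIn (V : Pseudovariety) : Type 1 where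
  carrier : Type
  [str : Semigroup carrier]
  mem : V.Mem carrier

attribute [instance] SgrIn.str

/-- A (bundled) topological semigroup. -/
structure TopSgr : Type 1 where
  carrier : Type
  [str : Semigroup carrier]
  [top : TopologicalSpace carrier]

attribute [instance] TopSgr.str TopSgr.top

/-- A finite semigroup regarded as a topological semigroup with the discrete topology. -/
def discTopSgr (S : Type) [Semigroup S] : TopSgr :=
  @TopSgr.mk S _ ⊥

/-- A pro-V semigroup: a compact Hausdorff topological semigroup that is residually `V`. -/
def IsProV (V : Pseudovariety) (S : TopSgr) : Prop :=
  CompactSpace S.carrier ∧ T2Space S.carrier ∧ ContinuousMul S.carrier ∧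
    ∀ x y : S.carrier, x ≠ y → ∃ (F : SgrIn V) (f : S.carrier →ₙ* F.carrier),
      ContinuousDisc ⇑f ∧ f x ≠ f y

/-- A profinite semigroup: a compact Hausdorff totally disconnected topological semigroup. -/
def IsProfiniteSgr (S : TopSgr) : Prop :=
  CompactSpace S.carrier ∧ T2Space S.carrier ∧ TotallyDisconnectedSpace S.carrier ∧
    ContinuousMul S.carrier

/-- `C`, together with the continuous homomorphisms `φ i`, is a `V`-coproduct of the
family `S` of pro-`V` semigroups. -/
structure IsCoproduct (V : Pseudovariety) {I : Type} (S : I → TopSgr)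
    (C : TopSgr) (φ : ∀ i, (S i).carrier →ₙ* C.carrier) : Prop where
  proV : IsProV V C
  cont : ∀ i, Continuous ⇑(φ i)
  universal : ∀ (T : TopSgr), IsProV V T →
    ∀ ψ : ∀ i, (S i).carrier →ₙ* T.carrier, (∀ i, Continuous ⇑(ψ i)) →
      ∃! Ψ : C.carrier →ₙ* T.carrier, Continuous ⇑Ψ ∧ ∀ i, Ψ.comp (φ i) = ψ i

/-- `P`, together with the homomorphisms `e i`, is a free product (coproduct in the
category of semigroups) of the family `S`. -/
structure IsFreeProduct {I : Type} (S : I → Type) [∀ i, Semigroup (S i)]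
    (P : Type) [Semigroup P] (e : ∀ i, S i →ₙ* P) : Prop where
  universal : ∀ (T : Type) [Semigroup T] (f : ∀ i, S i →ₙ* T),
    ∃! F : P →ₙ* T, ∀ i, F.comp (e i) = f i

/-! ### Particular pseudovarieties and related notions -/

/-- `V` contains the pseudovariety `Sl` of finite semilattices. -/
def ContainsSl (V : Pseudovariety) : Prop :=
  ∀ (S : Type) [Semigroup S] [Finite S],
    (∀ x y : S, x * y = y * x) → (∀ x : S, x * x = x) → V.Mem S

/-- Green's `J`-preorder: `s ≤_J t`, i.e. `s ∈ S^I t S^I`. -/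
def JBelow {S : Type} [Semigroup S] (s t : S) : Prop :=
  ∃ x y : WithOne S, x * (t : WithOne S) * y = (s : WithOne S)

/-- `V` contains the pseudovariety `J` of finite `J`-trivial semigroups. -/
def ContainsJ (V : Pseudovariety) : Prop :=
  ∀ (S : Type) [Semigroup S] [Finite S],
    (∀ s t : S, JBelow s t → JBelow t s → s = t) → V.Mem S

/-- The preimage of an idempotent under a semigroup homomorphism, as a subsemigroup. -/
def fiberSub {S T : Type} [Semigroup S] [Semigroup T] (ψ : S →ₙ* T) (e : T)
    (he : e * e = e) : Subsemigroup S where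
  carrier := ⇑ψ ⁻¹' {e}
  mul_mem' := by
    intro a b ha hb
    simp only [Set.mem_preimage, Set.mem_singleton_iff] at *
    rw [map_mul, ha, hb, he]

/-- The set of products of `n+1` elements of a semigroup (so `nthProds S 0 = S`). -/
def nthProds (S : Type) [Semigroup S] : ℕ → Set S
  | 0 => Set.univ
  | n + 1 => {x | ∃ a y, y ∈ nthProds S n ∧ x = a * y}

/-- A nilpotent semigroup: it has a zero `z` and some power of the semigroup is `{z}`. -/
def IsNilpotentSgr (S : Type) [Semigroup S] : Prop :=
  ∃ z : S, (∀ x : S, z * x = z ∧ x * z = z) ∧ ∃ n : ℕ, nthProds S n ⊆ {z}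

/-- A generator of the Mal'cev product `N ⓜ V`: a finite semigroup admitting a surjective
homomorphism onto a member of `V` all of whose idempotent fibers are nilpotent. -/
def NMalcevGen (V : Pseudovariety) (S : Type) [Semigroup S] : Prop :=
  Finite S ∧ ∃ (T : SgrIn V) (ψ : S →ₙ* T.carrier), Function.Surjective ψ ∧
    ∀ (e : T.carrier) (he : e * e = e), IsNilpotentSgr (fiberSub ψ e he)

/-- The equality `N ⓜ V = V`: `V` coincides with the smallest pseudovariety containing
all finite semigroups admitting an `N`-morphism onto some member of `V`. -/
def NMalcevFixed (V : Pseudovariety) : Prop :=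
  ∀ (S : Type) [Semigroup S] [Finite S],
    V.Mem S ↔ ∀ U : Pseudovariety,
      (∀ (S' : Type) [Semigroup S'], NMalcevGen V S' → U.Mem S') → U.Mem S

/-- A completely simple semigroup: simple with a primitive idempotent. -/
def IsCompletelySimple (S : Type) [Semigroup S] : Prop :=
  (∀ J : Set S, J.Nonempty → (∀ s x : S, x ∈ J → s * x ∈ J ∧ x * s ∈ J) → J = Set.univ) ∧
  ∃ e : S, e * e = e ∧ ∀ f : S, f * f = f → e * f = f → f * e = f → f = e

/-- An equidivisible semigroup. -/
def Equidivisible (S : Type) [Semigroup S] : Prop :=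
  ∀ u v x y : S, u * v = x * y →
    ∃ t : WithOne S,
      ((x : WithOne S) = (u : WithOne S) * t ∧ t * (y : WithOne S) = (v : WithOne S)) ∨
      ((x : WithOne S) * t = (u : WithOne S) ∧ (y : WithOne S) = t * (v : WithOne S))

/-! ### The two-sided Karnofsky–Rhodes expansion -/

/-- Vertices of the two-sided Cayley graph of `T`: pairs of elements of `T^I`. -/
abbrev KRVtx (T : Type) : Type := WithOne T × WithOne T

/-- Edges of the two-sided Cayley graph: (source, label, target). -/
abbrev KREdge (A T : Type) : Type := KRVtx T × A × KRVtx T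

/-- The image in `T^I` of a letter. -/
def letterImg {A T : Type} [Semigroup T] (ψ : FreeSemigroup A →ₙ* T) (a : A) : WithOne T :=
  (ψ (FreeSemigroup.of a) : WithOne T)

/-- The image in `T^I` of a (possibly empty) word. -/
def wordImg {A T : Type} [Semigroup T] (ψ : FreeSemigroup A →ₙ* T) (w : List A) : WithOne T :=
  (w.map (letterImg ψ)).prod

/-- `e` is an edge of the two-sided Cayley graph `Γ_ψ`. -/
def IsKREdge {A T : Type} [Semigroup T] (ψ : FreeSemigroup A →ₙ* T) (e : KREdge A T) : Prop :=
  e.1.1 * letterImg ψ e.2.1 = e.2.2.1 ∧ e.1.2 = letterImg ψ e.2.1 * e.2.2.2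

/-- One step along an edge of `Γ_ψ` (used to define directed paths). -/
def KRStep {A T : Type} [Semigroup T] (ψ : FreeSemigroup A →ₙ* T) (v w : KRVtx T) : Prop :=
  ∃ a : A, v.1 * letterImg ψ a = w.1 ∧ v.2 = letterImg ψ a * w.2

/-- A transition edge of `Γ_ψ`: an edge from whose target there is no directed path
back to its source. -/
def IsTransEdge {A T : Type} [Semigroup T] (ψ : FreeSemigroup A →ₙ* T) (e : KREdge A T) : Prop :=
  IsKREdge ψ e ∧ ¬ Relation.ReflTransGen (KRStep ψ) e.2.2 e.1

/-- The list of letters of an element of the free semigroup. -/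
def letters {A : Type} (u : FreeSemigroup A) : List A := u.head :: u.tail

/-- The set of edges of the path `p_u` of `Γ_ψ` from `(I, ψ u)` to `(ψ u, I)` labeled by `u`. -/
def pathEdges {A T : Type} [Semigroup T] (ψ : FreeSemigroup A →ₙ* T) (u : FreeSemigroup A) :
    Set (KREdge A T) :=
  {e | ∃ (w₁ w₂ : List A) (a : A), letters u = w₁ ++ a :: w₂ ∧
    e = ((wordImg ψ w₁, wordImg ψ (a :: w₂)), a, (wordImg ψ (w₁ ++ [a]), wordImg ψ w₂))}

/-- The set `T(p_u)` of transition edges of `Γ_ψ` occurring in the path `p_u`. -/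
def transEdges {A T : Type} [Semigroup T] (ψ : FreeSemigroup A →ₙ* T) (u : FreeSemigroup A) :
    Set (KREdge A T) :=
  {e ∈ pathEdges ψ u | IsTransEdge ψ e}

/-- A realization of the two-sided Karnofsky–Rhodes expansion of `ψ : A⁺ → T`:
a semigroup `K = T_ψ^KR` together with the projection `ψ^KR : A⁺ → K`, which is onto and
identifies `u` and `v` exactly when `ψ u = ψ v` and `T(p_u) = T(p_v)`, and the canonical
homomorphism `π : T_ψ^KR → T` with `π ∘ ψ^KR = ψ`. -/
structure KRExp {A T : Type} [Semigroup T] (ψ : FreeSemigroup A →ₙ* T) : Type 1 where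
  K : Type
  [strK : Semigroup K]
  [finK : Finite K]
  ψKR : FreeSemigroup A →ₙ* K
  π : K →ₙ* T
  surj : Function.Surjective ⇑ψKR
  ker : ∀ u v : FreeSemigroup A, ψKR u = ψKR v ↔
    (ψ u = ψ v ∧ transEdges ψ u = transEdges ψ v)
  proj : π.comp ψKR = ψ

attribute [instance] KRExp.strK KRExp.finK

/-- The data of a two-sided Karnofsky–Rhodes expansion of a finite semigroup `T`:
a finite alphabet `A`, an onto homomorphism `ψ : A⁺ → T`, and a realization `T_ψ^KR`. -/
structure KRData (T : Type) [Semigroup T] : Type 1 where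
  A : Type
  [finA : Finite A]
  ψ : FreeSemigroup A →ₙ* T
  surjψ : Function.Surjective ⇑ψ
  E : KRExp ψ

attribute [instance] KRData.finA

/-- `V` is closed under two-sided Karnofsky–Rhodes expansion. -/
def ClosedUnderKR (V : Pseudovariety) : Prop :=
  ∀ (A T : Type) [Finite A] [Semigroup T], V.Mem T →
    ∀ (ψ : FreeSemigroup A →ₙ* T), Function.Surjective ⇑ψ →
      ∀ E : KRExp ψ, V.Mem E.K

/-! ### KR-covers -/

/-- `S` is a KR-cover of the finite semigroup `T`. -/
def IsKRCoverOf (S : TopSgr) (T : Type) [Semigroup T] [Finite T] : Prop :=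
  (∃ φ : S.carrier →ₙ* T, ContinuousDisc ⇑φ ∧ Function.Surjective ⇑φ) ∧
  ∀ φ : S.carrier →ₙ* T, ContinuousDisc ⇑φ → Function.Surjective ⇑φ →
    ∃ (D : KRData T) (φψ : S.carrier →ₙ* D.E.K),
      ContinuousDisc ⇑φψ ∧ D.E.π.comp φψ = φ

/-- `S` is a KR-cover: a KR-cover of each of its finite continuous homomorphic images. -/
def IsKRCover (S : TopSgr) : Prop :=
  ∀ (T : Type) [Semigroup T] [Finite T],
    (∃ φ : S.carrier →ₙ* T, ContinuousDisc ⇑φ ∧ Function.Surjective ⇑φ) →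
    IsKRCoverOf S T

/-- `S` is `V`-projective. -/
def IsVProjective (V : Pseudovariety) (S : TopSgr) : Prop :=
  IsProV V S ∧ ∀ (T R : TopSgr), IsProV V T → IsProV V R →
    ∀ (f : S.carrier →ₙ* T.carrier) (g : R.carrier →ₙ* T.carrier),
      Continuous ⇑f → Continuous ⇑g → Function.Surjective ⇑g →
        ∃ f' : S.carrier →ₙ* R.carrier, Continuous ⇑f' ∧ g.comp f' = f

/-! ### Strong KR-covers and letter super-cancellativity -/

/-- `κ : A → S` is a generating mapping: its image generates a dense subsemigroup. -/
def GeneratingMap {A : Type} (S : TopSgr) (κ : A → S.carrier) : Prop :=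
  Dense (Subsemigroup.closure (Set.range κ) : Set S.carrier)

/-- The homomorphism `A⁺ → T` extending `a ↦ φ (κ a)`. -/
def liftGen {A : Type} (S : TopSgr) (κ : A → S.carrier) {T : Type} [Semigroup T]
    (φ : S.carrier →ₙ* T) : FreeSemigroup A →ₙ* T :=
  FreeSemigroup.lift (fun a => φ (κ a))

/-- `S` is a strong KR-cover of the finite semigroup `T` with respect to the
generating mapping `κ`. -/
def IsStrongKRCoverOfWrt {A : Type} (S : TopSgr) (κ : A → S.carrier)
    (T : Type) [Semigroup T] [Finite T] : Prop :=
  ∀ φ : S.carrier →ₙ* T, ContinuousDisc ⇑φ → Function.Surjective ⇑φ →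
    ∃ (E : KRExp (liftGen S κ φ)) (φκ : S.carrier →ₙ* E.K),
      ContinuousDisc ⇑φκ ∧ E.π.comp φκ = φ ∧
      ∀ a : A, φκ (κ a) = E.ψKR (FreeSemigroup.of a)

/-- `S` is a strong KR-cover of the finite semigroup `T` (with respect to some
generating mapping with finite domain). -/
def IsStrongKRCoverOf (S : TopSgr) (T : Type) [Semigroup T] [Finite T] : Prop :=
  ∃ A : Type, Finite A ∧ ∃ κ : A → S.carrier, GeneratingMap S κ ∧
    IsStrongKRCoverOfWrt S κ T

/-- `S` is a strong KR-cover: a strong KR-cover of each of its finite continuous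
homomorphic images. -/
def IsStrongKRCover (S : TopSgr) : Prop :=
  ∀ (T : Type) [Semigroup T] [Finite T],
    (∃ φ : S.carrier →ₙ* T, ContinuousDisc ⇑φ ∧ Function.Surjective ⇑φ) →
    IsStrongKRCoverOf S T

/-- `S` is letter super-cancellative with respect to the subset `A` of `S`. -/
def IsLSC (S : TopSgr) (A : Set S.carrier) : Prop :=
  ∀ a ∈ A, ∀ b ∈ A, ∀ u v : WithOne S.carrier,
    (u * (a : WithOne S.carrier) = v * (b : WithOne S.carrier) → a = b ∧ u = v) ∧
    ((a : WithOne S.carrier) * u = (b : WithOne S.carrier) * v → a = b ∧ u = v)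

/-! ### `S^I` and inverse limits -/

/-- The sum topology on `S^I = S ∪ {I}`: the point `I` is isolated and `S` keeps
its topology. -/
def withOneTopology (S : Type) [TopologicalSpace S] : TopologicalSpace (WithOne S) where
  IsOpen V := IsOpen ((fun s : S => (s : WithOne S)) ⁻¹' V)
  isOpen_univ := by simp
  isOpen_inter := by
    intro U V hU hV
    rw [Set.preimage_inter]
    exact hU.inter hV
  isOpen_sUnion := by
    intro s hs
    rw [Set.preimage_sUnion]
    exact isOpen_biUnion hs

/-- `S^I` as a topological semigroup (in fact a monoid): `S` with an isolated identity
adjoined. -/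
def withOneTopSgr (S : TopSgr) : TopSgr :=
  @TopSgr.mk (WithOne S.carrier) _ (withOneTopology S.carrier)

/-- The inverse limit of a family of topological semigroups, as a subsemigroup of
the product. -/
def invLimSub {I : Type} [Preorder I] (S : I → TopSgr)
    (f : ∀ i j, j ≤ i → ((S i).carrier →ₙ* (S j).carrier)) :
    Subsemigroup (∀ i, (S i).carrier) where
  carrier := {x | ∀ i j (h : j ≤ i), f i j h (x i) = x j}
  mul_mem' := by
    intro a b ha hb i j h
    simp only [Pi.mul_apply, map_mul, ha i j h, hb i j h]

/-- The inverse limit as a topological semigroup (with the topology induced from the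
product topology). -/
def invLimTopSgr {I : Type} [Preorder I] (S : I → TopSgr)
    (f : ∀ i j, j ≤ i → ((S i).carrier →ₙ* (S j).carrier)) : TopSgr :=
  TopSgr.mk (invLimSub S f)
/-! ### Auxiliary development for Statement 11 -/

section KRCAux

open FreeSemigroup Relation

variable {A T : Type} [Semigroup T]

theorem KRCletters_mul (u v : FreeSemigroup A) :
    letters (u * v) = letters u ++ letters v := rfl

theorem KRCletters_of (a : A) : letters (FreeSemigroup.of a) = [a] := rfl

theorem KRCwordImg_nil (ψ : FreeSemigroup A →ₙ* T) : wordImg ψ [] = 1 := rfl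

theorem KRCwordImg_cons (ψ : FreeSemigroup A →ₙ* T) (a : A) (l : List A) :
    wordImg ψ (a :: l) = letterImg ψ a * wordImg ψ l := by
  simp [wordImg]

theorem KRCwordImg_append (ψ : FreeSemigroup A →ₙ* T) (l₁ l₂ : List A) :
    wordImg ψ (l₁ ++ l₂) = wordImg ψ l₁ * wordImg ψ l₂ := by
  simp [wordImg]

theorem KRCwordImg_single (ψ : FreeSemigroup A →ₙ* T) (a : A) :
    wordImg ψ [a] = letterImg ψ a := by
  simp [wordImg]

theorem KRCwordImg_letters (ψ : FreeSemigroup A →ₙ* T) (u : FreeSemigroup A) :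
    wordImg ψ (letters u) = (ψ u : WithOne T) := by
  induction u using FreeSemigroup.recOnMul with
  | ih1 a => simp [KRCletters_of, KRCwordImg_single, letterImg]
  | ih2 x y hx hy =>
      rw [KRCletters_mul, KRCwordImg_append, hx, hy, map_mul, WithOne.coe_mul]

/-- The canonical edge of the path `p_u` corresponding to a decomposition. -/
def KRCedge (ψ : FreeSemigroup A →ₙ* T) (w₁ : List A) (a : A) (w₂ : List A) : KREdge A T :=
  ((wordImg ψ w₁, wordImg ψ (a :: w₂)), a, (wordImg ψ (w₁ ++ [a]), wordImg ψ w₂))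

theorem KRCmem_pathEdges (ψ : FreeSemigroup A →ₙ* T) (u : FreeSemigroup A) (e : KREdge A T) :
    e ∈ pathEdges ψ u ↔ ∃ w₁ w₂ a, letters u = w₁ ++ a :: w₂ ∧ e = KRCedge ψ w₁ a w₂ :=
  Iff.rfl

/-- Right translation of an edge. -/
def KRCRt (c : T) (e : KREdge A T) : KREdge A T :=
  ((e.1.1, e.1.2 * (c : WithOne T)), e.2.1, (e.2.2.1, e.2.2.2 * (c : WithOne T)))

/-- Left translation of an edge. -/
def KRCLt (c : T) (e : KREdge A T) : KREdge A T :=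
  (((c : WithOne T) * e.1.1, e.1.2), e.2.1, ((c : WithOne T) * e.2.2.1, e.2.2.2))

theorem KRCRt_edge (ψ : FreeSemigroup A →ₙ* T) (v : FreeSemigroup A)
    (w₁ : List A) (a : A) (k : List A) :
    KRCRt (ψ v) (KRCedge ψ w₁ a k) = KRCedge ψ w₁ a (k ++ letters v) := by
  simp [KRCRt, KRCedge, KRCwordImg_cons, KRCwordImg_append, KRCwordImg_letters, mul_assoc]

theorem KRCLt_edge (ψ : FreeSemigroup A →ₙ* T) (u : FreeSemigroup A)
    (w₁ : List A) (a : A) (w₂ : List A) :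
    KRCLt (ψ u) (KRCedge ψ w₁ a w₂) = KRCedge ψ (letters u ++ w₁) a w₂ := by
  simp [KRCLt, KRCedge, KRCwordImg_append, KRCwordImg_letters, mul_assoc]

theorem KRCpathEdges_mul (ψ : FreeSemigroup A →ₙ* T) (u v : FreeSemigroup A) :
    pathEdges ψ (u * v) = KRCRt (ψ v) '' pathEdges ψ u ∪ KRCLt (ψ u) '' pathEdges ψ v := by
  ext x
  rw [KRCmem_pathEdges]
  constructor
  · rintro ⟨w₁, w₂, a, hs, rfl⟩
    rw [KRCletters_mul] at hs
    rcases List.append_eq_append_iff.mp hs with ⟨k, hk1, hk2⟩ | ⟨k, hk1, hk2⟩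
    · -- w₁ = letters u ++ k, letters v = k ++ a :: w₂ : split in v
      refine Or.inr ⟨KRCedge ψ k a w₂, (KRCmem_pathEdges ψ v _).mpr ⟨k, w₂, a, hk2, rfl⟩, ?_⟩
      rw [KRCLt_edge, hk1]
    · -- letters u = w₁ ++ k, a :: w₂ = k ++ letters v
      rcases k with _ | ⟨a', k⟩
      · -- k = [] : w₁ = letters u, letters v = a :: w₂
        rw [List.nil_append] at hk2
        rw [List.append_nil] at hk1
        refine Or.inr ⟨KRCedge ψ [] a w₂,
          (KRCmem_pathEdges ψ v _).mpr ⟨[], w₂, a, hk2.symm, rfl⟩, ?_⟩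
        rw [KRCLt_edge, List.append_nil, hk1]
      · simp only [List.cons_append, List.cons.injEq] at hk2
        obtain ⟨rfl, rfl⟩ : a' = a ∧ w₂ = k ++ letters v := ⟨hk2.1.symm, hk2.2⟩
        refine Or.inl ⟨KRCedge ψ w₁ a' k,
          (KRCmem_pathEdges ψ u _).mpr ⟨w₁, k, a', hk1, rfl⟩, ?_⟩
        rw [KRCRt_edge]
  · rintro (⟨e₀, he₀, rfl⟩ | ⟨e₀, he₀, rfl⟩)
    · obtain ⟨w₁, w₂, a, hs, rfl⟩ := (KRCmem_pathEdges ψ u _).mp he₀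
      refine ⟨w₁, w₂ ++ letters v, a, ?_, (KRCRt_edge ψ v w₁ a w₂).symm ▸ rfl⟩
      rw [KRCletters_mul, hs]
      simp
    · obtain ⟨w₁, w₂, a, hs, rfl⟩ := (KRCmem_pathEdges ψ v _).mp he₀
      refine ⟨letters u ++ w₁, w₂, a, ?_, (KRCLt_edge ψ u w₁ a w₂).symm ▸ rfl⟩
      rw [KRCletters_mul, hs]
      simp

theorem KRCisKREdge_of_mem {ψ : FreeSemigroup A →ₙ* T} {u : FreeSemigroup A} {e : KREdge A T}
    (he : e ∈ pathEdges ψ u) : IsKREdge ψ e := by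
  obtain ⟨w₁, w₂, a, _, rfl⟩ := he
  constructor
  · show wordImg ψ w₁ * letterImg ψ a = wordImg ψ (w₁ ++ [a])
    rw [KRCwordImg_append, KRCwordImg_single]
  · show wordImg ψ (a :: w₂) = letterImg ψ a * wordImg ψ w₂
    rw [KRCwordImg_cons]

/-- Right translation of a vertex. -/
def KRCRv (c : T) (p : KRVtx T) : KRVtx T := (p.1, p.2 * (c : WithOne T))

/-- Left translation of a vertex. -/
def KRCLv (c : T) (p : KRVtx T) : KRVtx T := ((c : WithOne T) * p.1, p.2)

theorem KRCstep_Rv (ψ : FreeSemigroup A →ₙ* T) (c : T) {p q : KRVtx T} (h : KRStep ψ p q) :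
    KRStep ψ (KRCRv c p) (KRCRv c q) := by
  obtain ⟨a, h1, h2⟩ := h
  exact ⟨a, h1, by simp [KRCRv, h2, mul_assoc]⟩

theorem KRCstep_Lv (ψ : FreeSemigroup A →ₙ* T) (c : T) {p q : KRVtx T} (h : KRStep ψ p q) :
    KRStep ψ (KRCLv c p) (KRCLv c q) := by
  obtain ⟨a, h1, h2⟩ := h
  exact ⟨a, by simp [KRCLv, ← h1, mul_assoc], h2⟩

theorem KRCrtg_Rv (ψ : FreeSemigroup A →ₙ* T) (c : T) {p q : KRVtx T}
    (h : Relation.ReflTransGen (KRStep ψ) p q) :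
    Relation.ReflTransGen (KRStep ψ) (KRCRv c p) (KRCRv c q) :=
  Relation.ReflTransGen.lift (KRCRv c) (fun _ _ hs => KRCstep_Rv ψ c hs) _ _ h

theorem KRCrtg_Lv (ψ : FreeSemigroup A →ₙ* T) (c : T) {p q : KRVtx T}
    (h : Relation.ReflTransGen (KRStep ψ) p q) :
    Relation.ReflTransGen (KRStep ψ) (KRCLv c p) (KRCLv c q) :=
  Relation.ReflTransGen.lift (KRCLv c) (fun _ _ hs => KRCstep_Lv ψ c hs) _ _ h

theorem KRCnotTrans_Rt (ψ : FreeSemigroup A →ₙ* T) (c : T) {e : KREdge A T}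
    (hr : Relation.ReflTransGen (KRStep ψ) e.2.2 e.1) :
    ¬ IsTransEdge ψ (KRCRt c e) := by
  rintro ⟨_, hn⟩
  exact hn (KRCrtg_Rv ψ c hr)

theorem KRCnotTrans_Lt (ψ : FreeSemigroup A →ₙ* T) (c : T) {e : KREdge A T}
    (hr : Relation.ReflTransGen (KRStep ψ) e.2.2 e.1) :
    ¬ IsTransEdge ψ (KRCLt c e) := by
  rintro ⟨_, hn⟩
  exact hn (KRCrtg_Lv ψ c hr)

theorem KRCreturn_of_not_trans {ψ : FreeSemigroup A →ₙ* T} {e : KREdge A T}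
    (hE : IsKREdge ψ e) (h : ¬ IsTransEdge ψ e) :
    Relation.ReflTransGen (KRStep ψ) e.2.2 e.1 := by
  by_contra hr
  exact h ⟨hE, hr⟩

theorem KRCmem_transEdges {ψ : FreeSemigroup A →ₙ* T} {u : FreeSemigroup A} {e : KREdge A T} :
    e ∈ transEdges ψ u ↔ e ∈ pathEdges ψ u ∧ IsTransEdge ψ e :=
  Iff.rfl

theorem KRCtransEdges_mul (ψ : FreeSemigroup A →ₙ* T) (u v : FreeSemigroup A) :
    transEdges ψ (u * v) =
      (KRCRt (ψ v) '' transEdges ψ u ∪ KRCLt (ψ u) '' transEdges ψ v) ∩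
        {x | IsTransEdge ψ x} := by
  ext x
  rw [KRCmem_transEdges, KRCpathEdges_mul]
  constructor
  · rintro ⟨hm, ht⟩
    refine ⟨?_, ht⟩
    rcases hm with ⟨e, he, rfl⟩ | ⟨e, he, rfl⟩
    · by_cases hte : IsTransEdge ψ e
      · exact Or.inl ⟨e, ⟨he, hte⟩, rfl⟩
      · exact absurd ht (KRCnotTrans_Rt ψ _ (KRCreturn_of_not_trans (KRCisKREdge_of_mem he) hte))
    · by_cases hte : IsTransEdge ψ e
      · exact Or.inr ⟨e, ⟨he, hte⟩, rfl⟩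
      · exact absurd ht (KRCnotTrans_Lt ψ _ (KRCreturn_of_not_trans (KRCisKREdge_of_mem he) hte))
  · rintro ⟨hm, ht⟩
    refine ⟨?_, ht⟩
    rcases hm with ⟨e, he, rfl⟩ | ⟨e, he, rfl⟩
    · exact Or.inl ⟨e, he.1, rfl⟩
    · exact Or.inr ⟨e, he.1, rfl⟩

/-- The Karnofsky–Rhodes congruence. -/
def KRCrel (ψ : FreeSemigroup A →ₙ* T) (u v : FreeSemigroup A) : Prop :=
  ψ u = ψ v ∧ transEdges ψ u = transEdges ψ v

theorem KRCrel_refl (ψ : FreeSemigroup A →ₙ* T) (u : FreeSemigroup A) : KRCrel ψ u u :=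
  ⟨rfl, rfl⟩

theorem KRCrel_mul {ψ : FreeSemigroup A →ₙ* T} {u u' v v' : FreeSemigroup A}
    (h : KRCrel ψ u u') (h' : KRCrel ψ v v') : KRCrel ψ (u * v) (u' * v') := by
  refine ⟨by rw [map_mul, map_mul, h.1, h'.1], ?_⟩
  rw [KRCtransEdges_mul, KRCtransEdges_mul, h.1, h.2, h'.1, h'.2]

/-- The KR congruence as a setoid. -/
def KRCsetoid (ψ : FreeSemigroup A →ₙ* T) : Setoid (FreeSemigroup A) :=
  ⟨KRCrel ψ, ⟨fun u => KRCrel_refl ψ u, fun h => ⟨h.1.symm, h.2.symm⟩,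
    fun h h' => ⟨h.1.trans h'.1, h.2.trans h'.2⟩⟩⟩

/-- The KR expansion as a quotient. -/
def KRQ (ψ : FreeSemigroup A →ₙ* T) : Type := Quotient (KRCsetoid ψ)

instance KRQ.instSemigroup (ψ : FreeSemigroup A →ₙ* T) : Semigroup (KRQ ψ) where
  mul := Quotient.map₂ (· * ·) (fun _ _ h _ _ h' => KRCrel_mul h h')
  mul_assoc a b c := Quotient.inductionOn₃ a b c fun a b c =>
    congrArg (Quotient.mk (KRCsetoid ψ)) (mul_assoc a b c)

instance KRQ.instFiniteWithOne {X : Type} [Finite X] : Finite (WithOne X) := by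
  have : Fintype X := Fintype.ofFinite X
  exact inferInstanceAs (Finite (Option X))

instance KRQ.instFinite [Finite A] [Finite T] (ψ : FreeSemigroup A →ₙ* T) : Finite (KRQ ψ) := by
  refine Finite.of_injective
    (fun x : KRQ ψ => Quotient.liftOn x
      (fun u => ((ψ u, transEdges ψ u) : T × Set (KREdge A T)))
      (fun u v h => by
        have h' : KRCrel ψ u v := h
        show ((ψ u, transEdges ψ u) : T × Set (KREdge A T)) = (ψ v, transEdges ψ v)
        rw [h'.1, h'.2]))
    ?_
  intro x y
  refine Quotient.inductionOn₂ x y fun u v hv => ?_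
  exact Quotient.sound ⟨congrArg Prod.fst hv, congrArg Prod.snd hv⟩

/-- A concrete realization of the two-sided Karnofsky–Rhodes expansion. -/
def KRCexp [Finite A] [Finite T] (ψ : FreeSemigroup A →ₙ* T) : KRExp ψ where
  K := KRQ ψ
  ψKR := ⟨Quotient.mk (KRCsetoid ψ), fun _ _ => rfl⟩
  π := ⟨Quotient.lift (⇑ψ) (fun _ _ h => h.1),
    fun a b => Quotient.inductionOn₂ a b fun u v => map_mul ψ u v⟩
  surj := fun x => Quotient.inductionOn x fun u => ⟨u, rfl⟩
  ker := fun u v => ⟨fun h => Quotient.exact h, fun h => Quotient.sound h⟩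
  proj := rfl

end KRCAux
section KRCAux2

open FreeSemigroup Relation

variable {A T : Type} [Semigroup T]

theorem KRCpathEdges_of (ψ : FreeSemigroup A →ₙ* T) (a : A) :
    pathEdges ψ (FreeSemigroup.of a) = {KRCedge ψ [] a []} := by
  ext e
  rw [KRCmem_pathEdges, Set.mem_singleton_iff]
  constructor
  · rintro ⟨w₁, w₂, a', hs, rfl⟩
    rw [KRCletters_of] at hs
    rcases w₁ with _ | ⟨b, w₁⟩
    · simp only [List.nil_append, List.cons.injEq] at hs
      obtain ⟨rfl, rfl⟩ : a' = a ∧ w₂ = [] := ⟨hs.1.symm, hs.2.symm⟩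
      rfl
    · exfalso
      simp only [List.cons_append, List.cons.injEq] at hs
      exact absurd hs.2 (by simp)
  · rintro rfl
    exact ⟨[], [], a, rfl, rfl⟩

theorem KRCRt_Rt (c c' : T) (e : KREdge A T) :
    KRCRt c' (KRCRt c e) = KRCRt (c * c') e := by
  simp [KRCRt, mul_assoc]

/-- Inserting a letter mapping to a two-sided identity of `T` between two nonempty
words does not change the KR class. -/
theorem KRCrel_ins (ψ : FreeSemigroup A →ₙ* T) (c : A)
    (hc1 : ∀ t : T, ψ (FreeSemigroup.of c) * t = t)
    (hc2 : ∀ t : T, t * ψ (FreeSemigroup.of c) = t)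
    (u v : FreeSemigroup A) :
    KRCrel ψ (u * FreeSemigroup.of c * v) (u * v) := by
  have hψ : ψ (u * FreeSemigroup.of c * v) = ψ (u * v) := by
    rw [map_mul, map_mul, map_mul, hc2]
  set L : KREdge A T :=
    (((ψ u : WithOne T), (ψ v : WithOne T)), c, ((ψ u : WithOne T), (ψ v : WithOne T))) with hL
  have hpe : pathEdges ψ (u * FreeSemigroup.of c * v) = pathEdges ψ (u * v) ∪ {L} := by
    rw [KRCpathEdges_mul ψ (u * FreeSemigroup.of c) v, KRCpathEdges_mul ψ u (FreeSemigroup.of c),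
      KRCpathEdges_of, KRCpathEdges_mul ψ u v]
    rw [Set.image_union, Set.image_image, Set.image_singleton, Set.image_singleton]
    have h1 : (fun x : KREdge A T => KRCRt (ψ v) (KRCRt (ψ (FreeSemigroup.of c)) x)) = KRCRt (ψ v) := by
      funext x
      rw [KRCRt_Rt, hc1]
    have h2 : ψ (u * FreeSemigroup.of c) = ψ u := by rw [map_mul, hc2]
    have h3 : KRCRt (ψ v) (KRCLt (ψ u) (KRCedge ψ [] c [])) = L := by
      simp [KRCRt, KRCLt, KRCedge, KRCwordImg_cons, KRCwordImg_nil, KRCwordImg_single,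
        letterImg, ← WithOne.coe_mul, hc1, hc2, hL]
    rw [h1, h2, h3]
    ext x
    simp only [Set.mem_union, Set.mem_singleton_iff]
    tauto
  have hLnt : ¬ IsTransEdge ψ L := by
    rintro ⟨_, hn⟩
    exact hn Relation.ReflTransGen.refl
  refine ⟨hψ, ?_⟩
  ext e
  rw [KRCmem_transEdges, KRCmem_transEdges, hpe]
  constructor
  · rintro ⟨hm | hm, ht⟩
    · exact ⟨hm, ht⟩
    · rw [Set.mem_singleton_iff] at hm
      subst hm
      exact absurd ht hLnt
  · rintro ⟨hm, ht⟩
    exact ⟨Or.inl hm, ht⟩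

end KRCAux2

section KRCAux3

open FreeSemigroup Relation

variable {A B T₀ T : Type} [Semigroup T₀] [Semigroup T]
variable (ψ : FreeSemigroup A →ₙ* T₀) (ψ' : FreeSemigroup B →ₙ* T)
variable (j : T₀ →ₙ* T) (m : A → B)

theorem KRCmap_psi (hcompat : ∀ a, ψ' (FreeSemigroup.of (m a)) = j (ψ (FreeSemigroup.of a)))
    (u : FreeSemigroup A) : ψ' (FreeSemigroup.map m u) = j (ψ u) := by
  induction u using FreeSemigroup.recOnMul with
  | ih1 a => rw [FreeSemigroup.map_of, hcompat]
  | ih2 x y hx hy => rw [map_mul, map_mul, map_mul, map_mul, hx, hy]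

theorem KRCletters_map (u : FreeSemigroup A) :
    letters (FreeSemigroup.map m u) = (letters u).map m := by
  induction u using FreeSemigroup.recOnMul with
  | ih1 a => rw [FreeSemigroup.map_of]; rfl
  | ih2 x y hx hy =>
      rw [map_mul, KRCletters_mul, KRCletters_mul, List.map_append, hx, hy]

theorem KRCletterImg_map (hcompat : ∀ a, ψ' (FreeSemigroup.of (m a)) = j (ψ (FreeSemigroup.of a)))
    (a : A) : letterImg ψ' (m a) = WithOne.map j (letterImg ψ a) := by
  simp only [letterImg, hcompat, WithOne.map_coe]

theorem KRCmapMul (x y : WithOne T₀) :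
    WithOne.map j (x * y) = WithOne.map j x * WithOne.map j y := by
  induction x using WithOne.cases_on <;> induction y using WithOne.cases_on
  · simp [WithOne.map_bot]
  · simp [WithOne.map_bot]
  · simp [WithOne.map_bot]
  · intro b a
    rw [← WithOne.coe_mul, WithOne.map_coe, WithOne.map_coe, WithOne.map_coe, map_mul,
      WithOne.coe_mul]

theorem KRCwordImg_map (hcompat : ∀ a, ψ' (FreeSemigroup.of (m a)) = j (ψ (FreeSemigroup.of a)))
    (l : List A) : wordImg ψ' (l.map m) = WithOne.map j (wordImg ψ l) := by
  induction l with
  | nil => simp [KRCwordImg_nil]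
  | cons a t ih =>
      rw [List.map_cons, KRCwordImg_cons, KRCwordImg_cons, ih,
        KRCletterImg_map ψ ψ' j m hcompat, ← KRCmapMul j]

/-- The induced map on edges. -/
def KRCEm (e : KREdge A T₀) : KREdge B T :=
  ((WithOne.map j e.1.1, WithOne.map j e.1.2), m e.2.1,
    (WithOne.map j e.2.2.1, WithOne.map j e.2.2.2))

theorem KRCEm_edge (hcompat : ∀ a, ψ' (FreeSemigroup.of (m a)) = j (ψ (FreeSemigroup.of a)))
    (w₁ : List A) (a : A) (w₂ : List A) :
    KRCEm j m (KRCedge ψ w₁ a w₂) = KRCedge ψ' (w₁.map m) (m a) (w₂.map m) := by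
  simp only [KRCEm, KRCedge]
  rw [← KRCwordImg_map ψ ψ' j m hcompat, ← KRCwordImg_map ψ ψ' j m hcompat,
    ← KRCwordImg_map ψ ψ' j m hcompat, ← KRCwordImg_map ψ ψ' j m hcompat]
  simp [List.map_append]

theorem KRCpathEdges_map (hcompat : ∀ a, ψ' (FreeSemigroup.of (m a)) = j (ψ (FreeSemigroup.of a)))
    (u : FreeSemigroup A) :
    pathEdges ψ' (FreeSemigroup.map m u) = KRCEm j m '' pathEdges ψ u := by
  ext e
  rw [KRCmem_pathEdges]
  constructor
  · rintro ⟨w₁, w₂, b, hs, rfl⟩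
    rw [KRCletters_map] at hs
    obtain ⟨l₁, l₂, hl, h1, h2⟩ := List.map_eq_append_iff.mp hs
    obtain ⟨a, l₂', rfl, rfl, rfl⟩ := List.map_eq_cons_iff.mp h2
    refine ⟨KRCedge ψ l₁ a l₂', (KRCmem_pathEdges ψ u _).mpr ⟨l₁, l₂', a, hl, rfl⟩, ?_⟩
    rw [KRCEm_edge ψ ψ' j m hcompat, h1]
  · rintro ⟨e₀, he₀, rfl⟩
    obtain ⟨w₁, w₂, a, hs, rfl⟩ := (KRCmem_pathEdges ψ u _).mp he₀
    refine ⟨w₁.map m, w₂.map m, m a, ?_, (KRCEm_edge ψ ψ' j m hcompat w₁ a w₂).symm ▸ rfl⟩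
    rw [KRCletters_map, hs]
    simp

/-- The induced map on vertices. -/
def KRCjV (p : KRVtx T₀) : KRVtx T := (WithOne.map j p.1, WithOne.map j p.2)

theorem KRCstep_map (hcompat : ∀ a, ψ' (FreeSemigroup.of (m a)) = j (ψ (FreeSemigroup.of a)))
    {p q : KRVtx T₀} (h : KRStep ψ p q) : KRStep ψ' (KRCjV j p) (KRCjV j q) := by
  obtain ⟨a, h1, h2⟩ := h
  refine ⟨m a, ?_, ?_⟩
  · show WithOne.map j p.1 * letterImg ψ' (m a) = WithOne.map j q.1
    rw [KRCletterImg_map ψ ψ' j m hcompat, ← KRCmapMul j, h1]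
  · show WithOne.map j p.2 = letterImg ψ' (m a) * WithOne.map j q.2
    rw [KRCletterImg_map ψ ψ' j m hcompat, ← KRCmapMul j, ← h2]

theorem KRCrtg_map (hcompat : ∀ a, ψ' (FreeSemigroup.of (m a)) = j (ψ (FreeSemigroup.of a)))
    {p q : KRVtx T₀} (h : Relation.ReflTransGen (KRStep ψ) p q) :
    Relation.ReflTransGen (KRStep ψ') (KRCjV j p) (KRCjV j q) :=
  Relation.ReflTransGen.lift (KRCjV j) (fun _ _ hs => KRCstep_map ψ ψ' j m hcompat hs) _ _ h

theorem KRCnotTrans_map (hcompat : ∀ a, ψ' (FreeSemigroup.of (m a)) = j (ψ (FreeSemigroup.of a)))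
    {e : KREdge A T₀} (hr : Relation.ReflTransGen (KRStep ψ) e.2.2 e.1) :
    ¬ IsTransEdge ψ' (KRCEm j m e) := by
  rintro ⟨_, hn⟩
  exact hn (KRCrtg_map ψ ψ' j m hcompat hr)

theorem KRCtransEdges_map (hcompat : ∀ a, ψ' (FreeSemigroup.of (m a)) = j (ψ (FreeSemigroup.of a)))
    (u : FreeSemigroup A) :
    transEdges ψ' (FreeSemigroup.map m u) =
      (KRCEm j m '' transEdges ψ u) ∩ {x | IsTransEdge ψ' x} := by
  ext x
  rw [KRCmem_transEdges, KRCpathEdges_map ψ ψ' j m hcompat]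
  constructor
  · rintro ⟨⟨e, he, rfl⟩, ht⟩
    by_cases hte : IsTransEdge ψ e
    · exact ⟨⟨e, ⟨he, hte⟩, rfl⟩, ht⟩
    · exact absurd ht (KRCnotTrans_map ψ ψ' j m hcompat
        (KRCreturn_of_not_trans (KRCisKREdge_of_mem he) hte))
  · rintro ⟨⟨e, he, rfl⟩, ht⟩
    exact ⟨⟨e, he.1, rfl⟩, ht⟩

theorem KRCrel_map (hcompat : ∀ a, ψ' (FreeSemigroup.of (m a)) = j (ψ (FreeSemigroup.of a)))
    {u v : FreeSemigroup A} (h : KRCrel ψ u v) :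
    KRCrel ψ' (FreeSemigroup.map m u) (FreeSemigroup.map m v) := by
  refine ⟨?_, ?_⟩
  · rw [KRCmap_psi ψ ψ' j m hcompat, KRCmap_psi ψ ψ' j m hcompat, h.1]
  · rw [KRCtransEdges_map ψ ψ' j m hcompat, KRCtransEdges_map ψ ψ' j m hcompat, h.2]

end KRCAux3
section KRCAux4

open FreeSemigroup

variable {A B T₀ T : Type} [Semigroup T₀] [Semigroup T]
variable (ψ : FreeSemigroup A →ₙ* T₀) (ψ' : FreeSemigroup B →ₙ* T)
variable (j : T₀ →ₙ* T) (m : A → B) (c : B)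

/-- Padding a word with the identity letter on both sides. -/
def KRCpad (w : FreeSemigroup A) : FreeSemigroup B :=
  (FreeSemigroup.of c * FreeSemigroup.of c) * FreeSemigroup.map m w *
    (FreeSemigroup.of c * FreeSemigroup.of c)

variable (E₀ : KRExp ψ) (E' : KRExp ψ')

/-- The lifting map between the two KR expansions. -/
noncomputable def KRCtheta (x : E₀.K) : E'.K :=
  E'.ψKR (KRCpad m c (Function.surjInv E₀.surj x))

theorem KRCins
    (hc1 : ∀ t : T, ψ' (FreeSemigroup.of c) * t = t)
    (hc2 : ∀ t : T, t * ψ' (FreeSemigroup.of c) = t)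
    (u v : FreeSemigroup B) :
    E'.ψKR (u * FreeSemigroup.of c * v) = E'.ψKR (u * v) := by
  have h := KRCrel_ins ψ' c hc1 hc2 u v
  exact (E'.ker _ _).mpr ⟨h.1, h.2⟩

theorem KRCpad_wd
    (hcompat : ∀ a, ψ' (FreeSemigroup.of (m a)) = j (ψ (FreeSemigroup.of a)))
    (w w' : FreeSemigroup A) (hww : E₀.ψKR w = E₀.ψKR w') :
    E'.ψKR (KRCpad m c w) = E'.ψKR (KRCpad m c w') := by
  have h1 := (E₀.ker w w').mp hww
  have h2 : KRCrel ψ' (FreeSemigroup.map m w) (FreeSemigroup.map m w') :=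
    KRCrel_map ψ ψ' j m hcompat ⟨h1.1, h1.2⟩
  have h3 : KRCrel ψ' (KRCpad m c w) (KRCpad m c w') :=
    KRCrel_mul (KRCrel_mul (KRCrel_refl _ _) h2) (KRCrel_refl _ _)
  exact (E'.ker _ _).mpr ⟨h3.1, h3.2⟩

theorem KRCmerge
    (hc1 : ∀ t : T, ψ' (FreeSemigroup.of c) * t = t)
    (hc2 : ∀ t : T, t * ψ' (FreeSemigroup.of c) = t)
    (a b : FreeSemigroup B) :
    E'.ψKR ((FreeSemigroup.of c * FreeSemigroup.of c) * a * (FreeSemigroup.of c * FreeSemigroup.of c) *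
        ((FreeSemigroup.of c * FreeSemigroup.of c) * b * (FreeSemigroup.of c * FreeSemigroup.of c))) =
      E'.ψKR ((FreeSemigroup.of c * FreeSemigroup.of c) * (a * b) *
        (FreeSemigroup.of c * FreeSemigroup.of c)) := by
  set i := FreeSemigroup.of c with hi
  have e1 : (i*i) * a * (i*i) * ((i*i) * b * (i*i)) =
      ((i*i)*a*i) * FreeSemigroup.of c * ((i*i)*b*(i*i)) := by simp [hi, mul_assoc]
  rw [e1, KRCins ψ' c E' hc1 hc2]
  have e2 : ((i*i)*a*i) * ((i*i)*b*(i*i)) =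
      ((i*i)*a*i) * FreeSemigroup.of c * (i * b * (i*i)) := by simp [hi, mul_assoc]
  rw [e2, KRCins ψ' c E' hc1 hc2]
  have e3 : ((i*i)*a*i) * (i*b*(i*i)) =
      ((i*i)*a) * FreeSemigroup.of c * (i*b*(i*i)) := by simp [hi, mul_assoc]
  rw [e3, KRCins ψ' c E' hc1 hc2]
  have e4 : ((i*i)*a) * (i*b*(i*i)) =
      ((i*i)*a) * FreeSemigroup.of c * (b*(i*i)) := by simp [hi, mul_assoc]
  rw [e4, KRCins ψ' c E' hc1 hc2]
  exact congrArg _ (by simp [mul_assoc])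

theorem KRCtheta_mul
    (hcompat : ∀ a, ψ' (FreeSemigroup.of (m a)) = j (ψ (FreeSemigroup.of a)))
    (hc1 : ∀ t : T, ψ' (FreeSemigroup.of c) * t = t)
    (hc2 : ∀ t : T, t * ψ' (FreeSemigroup.of c) = t)
    (x y : E₀.K) :
    KRCtheta ψ ψ' m c E₀ E' (x * y) = KRCtheta ψ ψ' m c E₀ E' x * KRCtheta ψ ψ' m c E₀ E' y := by
  set σ := Function.surjInv E₀.surj with hσdef
  have hσ : ∀ z, E₀.ψKR (σ z) = z := fun z => Function.surjInv_eq E₀.surj z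
  show E'.ψKR (KRCpad m c (σ (x * y))) =
    E'.ψKR (KRCpad m c (σ x)) * E'.ψKR (KRCpad m c (σ y))
  rw [← map_mul]
  have h0 : E'.ψKR (KRCpad m c (σ (x * y))) = E'.ψKR (KRCpad m c (σ x * σ y)) :=
    KRCpad_wd ψ ψ' j m c E₀ E' hcompat _ _ (by rw [map_mul, hσ, hσ, hσ])
  rw [h0]
  have h1 : KRCpad m c (σ x * σ y) =
      (FreeSemigroup.of c * FreeSemigroup.of c) *
        (FreeSemigroup.map m (σ x) * FreeSemigroup.map m (σ y)) *
        (FreeSemigroup.of c * FreeSemigroup.of c) := by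
    unfold KRCpad
    rw [map_mul]
  rw [h1, ← KRCmerge ψ' c E' hc1 hc2]
  rfl

theorem KRCk_idem
    (hc1 : ∀ t : T, ψ' (FreeSemigroup.of c) * t = t)
    (hc2 : ∀ t : T, t * ψ' (FreeSemigroup.of c) = t) :
    E'.ψKR (FreeSemigroup.of c * FreeSemigroup.of c) *
      E'.ψKR (FreeSemigroup.of c * FreeSemigroup.of c) =
      E'.ψKR (FreeSemigroup.of c * FreeSemigroup.of c) := by
  rw [← map_mul]
  have e1 : (FreeSemigroup.of c * FreeSemigroup.of c) * (FreeSemigroup.of c * FreeSemigroup.of c) =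
      (FreeSemigroup.of c * FreeSemigroup.of c) * FreeSemigroup.of c *
        (FreeSemigroup.of (α := B) c) := by simp [mul_assoc]
  rw [e1, KRCins ψ' c E' hc1 hc2]
  have e2 : (FreeSemigroup.of c * FreeSemigroup.of c) * FreeSemigroup.of (α := B) c =
      FreeSemigroup.of c * FreeSemigroup.of c * FreeSemigroup.of (α := B) c := rfl
  have e3 : FreeSemigroup.of (α := B) c * FreeSemigroup.of c * FreeSemigroup.of c =
      FreeSemigroup.of c * FreeSemigroup.of c * FreeSemigroup.of (α := B) c := by
    simp [mul_assoc]
  rw [← e3, KRCins ψ' c E' hc1 hc2]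

theorem KRCk_mul_theta
    (hc1 : ∀ t : T, ψ' (FreeSemigroup.of c) * t = t)
    (hc2 : ∀ t : T, t * ψ' (FreeSemigroup.of c) = t)
    (x : E₀.K) :
    E'.ψKR (FreeSemigroup.of c * FreeSemigroup.of c) * KRCtheta ψ ψ' m c E₀ E' x =
      KRCtheta ψ ψ' m c E₀ E' x := by
  set w := FreeSemigroup.map m (Function.surjInv E₀.surj x) with hw
  show E'.ψKR (FreeSemigroup.of c * FreeSemigroup.of c) * E'.ψKR (KRCpad m c _) = _
  rw [← map_mul]
  set i := FreeSemigroup.of (α := B) c with hi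
  have e1 : (i * i) * KRCpad m c (Function.surjInv E₀.surj x) =
      (i * i * i) * FreeSemigroup.of c * (w * (i * i)) := by
    unfold KRCpad
    simp [hi, hw, mul_assoc]
  rw [e1, KRCins ψ' c E' hc1 hc2]
  have e2 : (i * i * i) * (w * (i * i)) = (i * i) * FreeSemigroup.of c * (w * (i * i)) := by
    simp [hi, mul_assoc]
  rw [e2, KRCins ψ' c E' hc1 hc2]
  exact congrArg _ (by unfold KRCpad; simp [hi, hw, mul_assoc])

theorem KRCtheta_mul_k
    (hc1 : ∀ t : T, ψ' (FreeSemigroup.of c) * t = t)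
    (hc2 : ∀ t : T, t * ψ' (FreeSemigroup.of c) = t)
    (x : E₀.K) :
    KRCtheta ψ ψ' m c E₀ E' x * E'.ψKR (FreeSemigroup.of c * FreeSemigroup.of c) =
      KRCtheta ψ ψ' m c E₀ E' x := by
  set w := FreeSemigroup.map m (Function.surjInv E₀.surj x) with hw
  show E'.ψKR (KRCpad m c _) * E'.ψKR (FreeSemigroup.of c * FreeSemigroup.of c) = _
  rw [← map_mul]
  set i := FreeSemigroup.of (α := B) c with hi
  have e1 : KRCpad m c (Function.surjInv E₀.surj x) * (i * i) =
      ((i * i) * w * i) * FreeSemigroup.of c * (i * i) := by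
    unfold KRCpad
    simp [hi, hw, mul_assoc]
  rw [e1, KRCins ψ' c E' hc1 hc2]
  have e2 : ((i * i) * w * i) * (i * i) = ((i * i) * w) * FreeSemigroup.of c * (i * i) := by
    simp [hi, mul_assoc]
  rw [e2, KRCins ψ' c E' hc1 hc2]
  exact congrArg _ (by unfold KRCpad; simp [hi, hw, mul_assoc])

theorem KRCpi_theta
    (hcompat : ∀ a, ψ' (FreeSemigroup.of (m a)) = j (ψ (FreeSemigroup.of a)))
    (hc1 : ∀ t : T, ψ' (FreeSemigroup.of c) * t = t)
    (hc2 : ∀ t : T, t * ψ' (FreeSemigroup.of c) = t)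
    (x : E₀.K) :
    E'.π (KRCtheta ψ ψ' m c E₀ E' x) = j (E₀.π x) := by
  set σx := Function.surjInv E₀.surj x with hσx
  have hpsi : E'.π (E'.ψKR (KRCpad m c σx)) = ψ' (KRCpad m c σx) :=
    DFunLike.congr_fun E'.proj (KRCpad m c σx)
  show E'.π (E'.ψKR (KRCpad m c σx)) = j (E₀.π x)
  rw [hpsi]
  unfold KRCpad
  rw [map_mul, map_mul, map_mul, hc1, hc1, hc2]
  rw [KRCmap_psi ψ ψ' j m hcompat]
  have h2 : ψ σx = E₀.π (E₀.ψKR σx) := (DFunLike.congr_fun E₀.proj σx).symm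
  rw [h2, Function.surjInv_eq E₀.surj x]

theorem KRCpi_k :
    E'.π (E'.ψKR (FreeSemigroup.of c * FreeSemigroup.of c)) =
      ψ' (FreeSemigroup.of c) * ψ' (FreeSemigroup.of c) := by
  have h : E'.π (E'.ψKR (FreeSemigroup.of c * FreeSemigroup.of c)) =
      ψ' (FreeSemigroup.of c * FreeSemigroup.of c) :=
    DFunLike.congr_fun E'.proj (FreeSemigroup.of c * FreeSemigroup.of c)
  rw [h, map_mul]

end KRCAux4
/-- Adjoining an isolated identity to a profinite KR-cover yields a
KR-cover. -/
theorem withOne_isKRCover (S : TopSgr) (hpro : IsProfiniteSgr S)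
    (hKR : IsKRCover S) :
    IsKRCover (withOneTopSgr S) := by
  classical
  intro T _ _ hex
  refine ⟨hex, ?_⟩
  intro φ hφc hφs
  have hdisc : ∀ (X : Type) (V : Set X), @IsOpen X ⊥ V := fun X V =>
    @isOpen_discrete X ⊥ (discreteTopology_bot X) V
  set φ₁ : S.carrier →ₙ* T := φ.comp WithOne.coeMulHom with hφ₁def
  have hφ1c : ∀ V : Set T, IsOpen (⇑φ₁ ⁻¹' V) := by
    intro V
    exact (continuous_def.mp hφc) V (hdisc T V)
  set φ₀ : S.carrier →ₙ* ↥φ₁.srange := φ₁.srangeRestrict with hφ₀def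
  have hφ₀c : ContinuousDisc ⇑φ₀ := by
    show @Continuous _ _ _ ⊥ ⇑φ₀
    rw [continuous_def]
    intro V _
    have hset : ⇑φ₀ ⁻¹' V = ⇑φ₁ ⁻¹' (Subtype.val '' V) := by
      ext s
      rw [Set.mem_preimage, Set.mem_preimage, ← MulHom.coe_srangeRestrict φ₁ s]
      exact (Subtype.val_injective.mem_set_image).symm
    rw [hset]
    exact hφ1c _
  have hφ₀s : Function.Surjective ⇑φ₀ := MulHom.srangeRestrict_surjective φ₁
  obtain ⟨D₀, hl, hlc, hlπ⟩ := (hKR ↥φ₁.srange ⟨φ₀, hφ₀c, hφ₀s⟩).2 φ₀ hφ₀c hφ₀s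
  have he : ∀ t : T, φ (1 : WithOne S.carrier) * t = t ∧ t * φ (1 : WithOne S.carrier) = t := by
    intro t
    obtain ⟨x, rfl⟩ := hφs t
    exact ⟨(map_mul φ (1 : WithOne S.carrier) x).symm.trans
        (congrArg φ (@one_mul (WithOne S.carrier) _ x)),
      (map_mul φ x (1 : WithOne S.carrier)).symm.trans
        (congrArg φ (@mul_one (WithOne S.carrier) _ x))⟩
  set j : ↥φ₁.srange →ₙ* T := MulMemClass.subtype φ₁.srange with hjdef
  set g : D₀.A ⊕ Unit → T :=
    Sum.elim (fun a => j (D₀.ψ (FreeSemigroup.of a))) (fun _ => φ (1 : WithOne S.carrier)) with hgdef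
  set ψ' : FreeSemigroup (D₀.A ⊕ Unit) →ₙ* T := FreeSemigroup.lift g with hψ'def
  have hcompat : ∀ a : D₀.A,
      ψ' (FreeSemigroup.of (Sum.inl a)) = j (D₀.ψ (FreeSemigroup.of a)) := by
    intro a
    rw [hψ'def, FreeSemigroup.lift_of, hgdef]
    rfl
  have hψ'ι : ψ' (FreeSemigroup.of (Sum.inr ())) = φ (1 : WithOne S.carrier) := by
    rw [hψ'def, FreeSemigroup.lift_of, hgdef]
    rfl
  have hc1 : ∀ t : T, ψ' (FreeSemigroup.of (Sum.inr ())) * t = t := by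
    intro t
    rw [hψ'ι]
    exact (he t).1
  have hc2 : ∀ t : T, t * ψ' (FreeSemigroup.of (Sum.inr ())) = t := by
    intro t
    rw [hψ'ι]
    exact (he t).2
  have hsurj' : Function.Surjective ⇑ψ' := by
    intro t
    obtain ⟨x, rfl⟩ := hφs t
    rcases eq_or_ne x (1 : WithOne S.carrier) with rfl | hx
    · exact ⟨FreeSemigroup.of (Sum.inr ()), hψ'ι⟩
    · obtain ⟨s, rfl⟩ := WithOne.ne_one_iff_exists.mp hx
      obtain ⟨u, hu⟩ := D₀.surjψ (φ₀ s)
      refine ⟨FreeSemigroup.map Sum.inl u, ?_⟩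
      rw [KRCmap_psi D₀.ψ ψ' j Sum.inl hcompat u, hu]
      exact MulHom.coe_srangeRestrict φ₁ s
  set E' := KRCexp ψ' with hE'def
  set Θ : D₀.E.K → E'.K := KRCtheta D₀.ψ ψ' Sum.inl (Sum.inr ()) D₀.E E' with hΘdef
  set k : E'.K :=
    E'.ψKR (FreeSemigroup.of (Sum.inr ()) * FreeSemigroup.of (Sum.inr ())) with hkdef
  set Φf : WithOne S.carrier → E'.K :=
    fun x => if hx : x = 1 then k else Θ (hl (WithOne.unone hx)) with hΦfdef
  have hΦf1 : Φf (1 : WithOne S.carrier) = k := dif_pos rfl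
  have hΦfc : ∀ s : S.carrier, Φf ((s : WithOne S.carrier)) = Θ (hl s) := by
    intro s
    show (if hx : (s : WithOne S.carrier) = 1 then k else Θ (hl (WithOne.unone hx))) = Θ (hl s)
    rw [dif_neg WithOne.coe_ne_one, WithOne.unone_coe]
  have hmul : ∀ x y, Φf (x * y) = Φf x * Φf y := by
    intro x y
    rcases eq_or_ne x (1 : WithOne S.carrier) with rfl | hx
    · rcases eq_or_ne y (1 : WithOne S.carrier) with rfl | hy
      · rw [one_mul, hΦf1]
        exact (KRCk_idem ψ' (Sum.inr ()) E' hc1 hc2).symm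
      · obtain ⟨t, rfl⟩ := WithOne.ne_one_iff_exists.mp hy
        rw [one_mul, hΦf1, hΦfc t]
        exact (KRCk_mul_theta D₀.ψ ψ' Sum.inl (Sum.inr ()) D₀.E E' hc1 hc2 (hl t)).symm
    · obtain ⟨s, rfl⟩ := WithOne.ne_one_iff_exists.mp hx
      rcases eq_or_ne y (1 : WithOne S.carrier) with rfl | hy
      · rw [mul_one, hΦf1, hΦfc s]
        exact (KRCtheta_mul_k D₀.ψ ψ' Sum.inl (Sum.inr ()) D₀.E E' hc1 hc2 (hl s)).symm
      · obtain ⟨t, rfl⟩ := WithOne.ne_one_iff_exists.mp hy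
        rw [← WithOne.coe_mul, hΦfc (s * t), hΦfc s, hΦfc t, map_mul]
        exact KRCtheta_mul D₀.ψ ψ' j Sum.inl (Sum.inr ()) D₀.E E' hcompat hc1 hc2 (hl s) (hl t)
  refine ⟨⟨D₀.A ⊕ Unit, ψ', hsurj', E'⟩, ⟨Φf, hmul⟩, ?_, ?_⟩
  · show @Continuous (WithOne S.carrier) E'.K (withOneTopology S.carrier) ⊥ Φf
    rw [continuous_def]
    intro V _
    show IsOpen ((fun s : S.carrier => ((s : WithOne S.carrier))) ⁻¹' (Φf ⁻¹' V))
    have hset : (fun s : S.carrier => ((s : WithOne S.carrier))) ⁻¹' (Φf ⁻¹' V) =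
        ⇑hl ⁻¹' (Θ ⁻¹' V) := by
      ext s
      simp only [Set.mem_preimage]
      rw [hΦfc s]
    rw [hset]
    exact (continuous_def.mp hlc) _ (hdisc _ _)
  · apply MulHom.ext
    intro x
    rcases eq_or_ne x (1 : WithOne S.carrier) with rfl | hx
    · show E'.π (Φf (1 : WithOne S.carrier)) = φ (1 : WithOne S.carrier)
      rw [hΦf1, hkdef, KRCpi_k ψ' (Sum.inr ()) E', hψ'ι]
      exact (he (φ (1 : WithOne S.carrier))).1
    · obtain ⟨s, rfl⟩ := WithOne.ne_one_iff_exists.mp hx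
      show E'.π (Φf ((s : WithOne S.carrier))) = φ ((s : WithOne S.carrier))
      rw [hΦfc s, hΘdef,
        KRCpi_theta D₀.ψ ψ' j Sum.inl (Sum.inr ()) D₀.E E' hcompat hc1 hc2 (hl s),
        show D₀.E.π (hl s) = φ₀ s from DFunLike.congr_fun hlπ s]
      exact MulHom.coe_srangeRestrict φ₁ s
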